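/- Let m ≥ 1 be an integer and σ = 1/(2(m+1)). Then for all integers ν ≥ 0, (1+σ)^ν · (3m² + (3m² + 3m)(σ - σ²) - 3m(1+σ)) - m² + 3m - 2 > 0. -/
import Mathlib


/-- Polynomial-exponential inequality used in assumption (5g2) of the slow
rotation KAM iteration, for `σ = 1/(2(m+1))`. -/
theorem stmt6 (m : ℕ) (hm : 1 ≤ m) (σ : ℝ)
    (hσ : σ = 1 / (2 * ((m : ℝ) + 1))) :
    ∀ ν : ℕ,
      0 < (1 + σ) ^ ν *
          (3 * (m : ℝ) ^ 2 + (3 * (m : ℝ) ^ 2 + 3 * m) * (σ - σ ^ 2) -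
            3 * m * (1 + σ)) - (m : ℝ) ^ 2 + 3 * m - 2 := by
  intro ν
  set M : ℝ := (m : ℝ) with hM
  have hM1 : (1 : ℝ) ≤ M := by rw [hM]; exact_mod_cast hm
  have hden : (0 : ℝ) < 2 * (M + 1) := by linarith
  have hσ0 : 0 < σ := by rw [hσ]; positivity
  set A : ℝ := 3 * M ^ 2 + (3 * M ^ 2 + 3 * M) * (σ - σ ^ 2) - 3 * M * (1 + σ)
    with hA
  have hσval : σ * (2 * (M + 1)) = 1 := by
    rw [hσ]; field_simp
  have hkey : M ^ 2 - 3 * M + 2 < A := by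
    have hσq : σ ^ 2 * (2 * (M + 1)) ^ 2 = 1 := by
      nlinarith [hσval]
    nlinarith [hσval, hσq, sq_nonneg σ, sq_nonneg (M - 1), hσ0.le,
      mul_pos hσ0 hσ0]
  have hnn : (0 : ℝ) ≤ M ^ 2 - 3 * M + 2 := by
    rcases eq_or_lt_of_le hm with h | h
    · simp [hM, ← h]; norm_num
    · have : (2 : ℝ) ≤ M := by rw [hM]; exact_mod_cast h
      nlinarith
  have hApos : 0 < A := lt_of_le_of_lt hnn hkey
  have hpow : (1 : ℝ) ≤ (1 + σ) ^ ν := one_le_pow₀ (by linarith)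
  nlinarith [mul_le_mul_of_nonneg_right hpow hApos.le]
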